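/- Ville's theorem: A set P ⊆ 2^ω has μ-outer measure zero if and only if there is a martingale d such that P ⊆ S[d]. -/

import Mathlib

open scoped ENNReal NNReal Classical

namespace AR

/-- Elements of Cantor space `2^ω`: infinite binary sequences. -/
abbrev Seq := ℕ → Bool

/-- Finite binary strings `2^{<ω}`. -/
abbrev Str := List Bool

/-- The first `n` bits of a sequence `A`, as a finite string (`A↾n`). -/
def pre (A : Seq) (n : ℕ) : Str := List.ofFn fun i : Fin n => A i

/-- The basic clopen cylinder `[σ]` of all sequences extending `σ`. -/
def cyl (σ : Str) : Set Seq := {A | pre A σ.length = σ}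

/-- A measure on Cantor space is *fair-coin* if every cylinder `[σ]` has measure
`2^{-|σ|}`; this uniquely characterizes the usual product measure `μ` on `2^ω`. -/
def FairCoin (μ : MeasureTheory.Measure Seq) : Prop :=
  ∀ σ : Str, μ (cyl σ) = (2 : ℝ≥0∞)⁻¹ ^ σ.length

/-- A machine is a partial computable function `2^{<ω} ⇀ 2^{<ω}`. -/
def IsMachine (M : Str →. Str) : Prop := Partrec M

/-- Kolmogorov complexity of `τ` relative to the machine `M`:
`C_M(τ) = min{|σ| : M(σ)↓ = τ}`, with value `∞` if no such `σ` exists. -/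
noncomputable def Cplx (M : Str →. Str) (τ : Str) : ℕ∞ :=
  sInf ((fun σ : Str => (σ.length : ℕ∞)) '' {σ | τ ∈ M σ})

/-- A universal machine: a machine simulating every machine up to an additive
constant.  `Cplx U` for universal `U` is plain Kolmogorov complexity `C`. -/
def UniversalMachine (U : Str →. Str) : Prop :=
  IsMachine U ∧ ∀ M : Str →. Str, IsMachine M → ∃ c : ℕ, ∀ τ, Cplx U τ ≤ Cplx M τ + c

/-- A set of strings is prefix-free if none of its elements is a proper initial
segment of another. -/
def PrefixFree (S : Set Str) : Prop :=
  ∀ σ ∈ S, ∀ τ ∈ S, σ <+: τ → σ = τ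

/-- A prefix-free machine: a machine whose domain is prefix-free. -/
def PrefixFreeMachine (M : Str →. Str) : Prop :=
  IsMachine M ∧ PrefixFree {σ | (M σ).Dom}

/-- A universal prefix-free machine.  `Cplx U` for such `U` is prefix-free
Kolmogorov complexity `K`. -/
def UniversalPFMachine (U : Str →. Str) : Prop :=
  PrefixFreeMachine U ∧
    ∀ M : Str →. Str, PrefixFreeMachine M → ∃ c : ℕ, ∀ τ, Cplx U τ ≤ Cplx M τ + c

/-- A c.e. (recursively enumerable) predicate. -/
def CEPred {α} [Primcodable α] (p : α → Prop) : Prop :=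
  Partrec fun a => Part.assert (p a) fun _ => Part.some ()

/-- A Martin-Löf test: a sequence of uniformly Σ⁰₁ classes `U i`, given by a single
c.e. set `W` of pairs, with `μ (U i) ≤ 2^{-i}`. -/
def MLTest (μ : MeasureTheory.Measure Seq) (U : ℕ → Set Seq) : Prop :=
  ∃ W : Set (ℕ × Str), CEPred (· ∈ W) ∧
    (∀ i, U i = ⋃ σ ∈ {σ : Str | (i, σ) ∈ W}, cyl σ) ∧
    ∀ i, μ (U i) ≤ (2 : ℝ≥0∞)⁻¹ ^ i

/-- `A` is Martin-Löf random if it passes every Martin-Löf test. -/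
def MLRandom (μ : MeasureTheory.Measure Seq) (A : Seq) : Prop :=
  ∀ U : ℕ → Set Seq, MLTest μ U → A ∉ ⋂ i, U i

/-- A martingale: a nonnegative function on strings satisfying the fairness
condition `d(σ) = (d(σ0) + d(σ1))/2`. -/
def IsMartingale (d : Str → ℝ≥0) : Prop :=
  ∀ σ : Str, d σ = (d (σ ++ [false]) + d (σ ++ [true])) / 2

/-- An `s`-gale: `d(σ) = 2^{-s} (d(σ0) + d(σ1))`. -/
def IsGale (s : ℝ) (d : Str → ℝ≥0) : Prop :=
  ∀ σ : Str, (d σ : ℝ) = (2 : ℝ) ^ (-s) * ((d (σ ++ [false]) : ℝ) + (d (σ ++ [true]) : ℝ))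

/-- `d` succeeds on `A` if `limsup_n d(A↾n) = ∞`. -/
def Succeeds (d : Str → ℝ≥0) (A : Seq) : Prop :=
  Filter.limsup (fun n => (d (pre A n) : ℝ≥0∞)) Filter.atTop = ⊤

/-- The success set `S[d]` of `d`. -/
def successSet (d : Str → ℝ≥0) : Set Seq := {A | Succeeds d A}

/-- The values of `d` are uniformly left-c.e. reals: there is a computable
`g : 2^{<ω} × ℕ → ℚ`, nondecreasing in the second argument, with
`sup_n g(σ, n) = d(σ)` (i.e. `g(σ, ·) → d(σ)`) for every `σ`.  A martingale
(or `s`-gale) with this property is a c.e. martingale (or c.e. `s`-gale). -/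
def CEValues (d : Str → ℝ≥0) : Prop :=
  ∃ g : Str × ℕ → ℚ, Computable g ∧ (∀ σ, Monotone fun n => g (σ, n)) ∧
    ∀ σ, Filter.Tendsto (fun n => (g (σ, n) : ℝ)) Filter.atTop (nhds (d σ))

@[simp] lemma length_pre (A : Seq) (n : ℕ) : (pre A n).length = n := by
  simp [pre]

@[simp] lemma pre_zero (A : Seq) : pre A 0 = [] := by simp [pre]

lemma pre_succ (A : Seq) (n : ℕ) : pre A (n + 1) = pre A n ++ [A n] := by
  rw [pre, List.ofFn_succ', List.concat_eq_append]
  simp [pre]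

lemma pre_take (A : Seq) {m n : ℕ} (h : m ≤ n) : (pre A n).take m = pre A m := by
  induction n with
  | zero => simp_all
  | succ n ih =>
    rcases Nat.lt_or_ge m (n+1) with h' | h'
    · rw [pre_succ, List.take_append_of_le_length (by simpa using Nat.lt_succ_iff.mp h'),
        ih (Nat.lt_succ_iff.mp h')]
    · have : m = n + 1 := le_antisymm h h'
      subst this
      have h2 := List.take_length (l := pre A (n+1))
      rw [length_pre] at h2
      exact h2

lemma mem_cyl (A : Seq) (σ : Str) : A ∈ cyl σ ↔ pre A σ.length = σ := Iff.rfl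

@[simp] lemma cyl_nil : cyl [] = Set.univ := by
  ext A; simp [cyl]

lemma mem_cyl_append (A : Seq) (σ : Str) (b : Bool) :
    A ∈ cyl (σ ++ [b]) ↔ A ∈ cyl σ ∧ A σ.length = b := by
  constructor
  · intro h
    have h' : pre A σ.length ++ [A σ.length] = σ ++ [b] := by
      have := h; simp only [mem_cyl, List.length_append, List.length_singleton] at this
      rw [← pre_succ]; exact this
    obtain ⟨h1, h2⟩ := List.append_inj' h' (by simp)
    exact ⟨h1, by simpa using h2⟩
  · rintro ⟨h1, h2⟩
    simp only [mem_cyl, List.length_append, List.length_singleton, pre_succ]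
    rw [mem_cyl] at h1; rw [h1, h2]

lemma cyl_eq_union (σ : Str) :
    cyl σ = cyl (σ ++ [false]) ∪ cyl (σ ++ [true]) := by
  ext A
  simp only [Set.mem_union, mem_cyl_append]
  constructor
  · intro h; cases hb : A σ.length
    · exact Or.inl ⟨h, rfl⟩
    · exact Or.inr ⟨h, rfl⟩
  · rintro (⟨h, _⟩ | ⟨h, _⟩) <;> exact h

lemma cyl_disjoint (σ : Str) : Disjoint (cyl (σ ++ [false])) (cyl (σ ++ [true])) := by
  rw [Set.disjoint_left]
  intro A h1 h2
  rw [mem_cyl_append] at h1 h2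
  rw [h1.2] at h2
  exact absurd h2.2 (by simp)

lemma pre_eq_iff (A : Seq) (σ : Str) :
    pre A σ.length = σ ↔ ∀ i : Fin σ.length, A i = σ.get i := by
  rw [List.ext_get_iff]
  simp only [length_pre, true_and]
  constructor
  · intro h i
    have := h i i.isLt (by simp [i.isLt])
    simpa [pre, List.get_ofFn] using this
  · intro h i h1 h2
    simpa [pre, List.get_ofFn] using h ⟨i, h2⟩

lemma measurableSet_cyl (σ : Str) : MeasurableSet (cyl σ) := by
  have : cyl σ = ⋂ i : Fin σ.length, {A : Seq | A i = σ.get i} := by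
    ext A
    simp only [mem_cyl, Set.mem_iInter, Set.mem_setOf_eq, pre_eq_iff]
  rw [this]
  exact MeasurableSet.iInter fun i =>
    (measurable_pi_apply (i : ℕ)) (MeasurableSet.singleton _)

lemma cyl_anti (A : Seq) {m n : ℕ} (h : m ≤ n) : cyl (pre A n) ⊆ cyl (pre A m) := by
  intro B hB
  simp only [mem_cyl, length_pre] at *
  rw [← pre_take B h, hB, pre_take A h]


lemma IsMartingale.two_mul {d : Str → ℝ≥0} (hd : IsMartingale d) (σ : Str) :
    2 * d σ = d (σ ++ [false]) + d (σ ++ [true]) := by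
  rw [hd σ, mul_div_cancel₀]
  exact two_ne_zero

lemma level_sum {d : Str → ℝ≥0} (hd : IsMartingale d) :
    ∀ (n : ℕ), ∑ x : Fin n → Bool, d (List.ofFn x) = 2 ^ n * d [] := by
  intro n
  induction n generalizing d with
  | zero => simp
  | succ n ih =>
    rw [← Equiv.sum_comp (Fin.consEquiv (fun _ : Fin (n+1) => Bool)) (fun x => d (List.ofFn x))]
    have key : ∀ p : Bool × (Fin n → Bool),
        d (List.ofFn ((Fin.consEquiv (fun _ : Fin (n+1) => Bool)) p)) = d (p.1 :: List.ofFn p.2) := by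
      rintro ⟨b, y⟩
      congr 1
      simp [List.ofFn_succ, Fin.consEquiv]
    rw [Finset.sum_congr rfl (fun p _ => key p), Fintype.sum_prod_type]
    have hcons : ∀ b : Bool, IsMartingale (fun σ => d (b :: σ)) := by
      intro b σ
      simpa using hd (b :: σ)
    have : ∀ b : Bool, ∑ y : Fin n → Bool, d (b :: List.ofFn y) = 2 ^ n * d [b] := by
      intro b
      simpa using ih (hcons b)
    simp only [this]
    rw [Fintype.sum_bool]
    have := hd.two_mul []
    simp only [List.nil_append] at this
    rw [← mul_add, add_comm (d [true]), ← this]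
    ring

noncomputable def stopped (d : Str → ℝ≥0) (c : ℝ≥0) (σ : Str) : ℝ≥0 :=
  if h : ∃ m, m ≤ σ.length ∧ c ≤ d (σ.take m) then d (σ.take (Nat.find h)) else d σ

lemma stopped_nil (d : Str → ℝ≥0) (c : ℝ≥0) : stopped d c [] = d [] := by
  unfold stopped
  split
  · next h =>
    have h1 : Nat.find h = 0 := Nat.le_zero.mp (by simpa using (Nat.find_spec h).1)
    rw [h1]; simp
  · rfl

lemma le_stopped {d : Str → ℝ≥0} {c : ℝ≥0} {σ : Str}
    (h : ∃ m, m ≤ σ.length ∧ c ≤ d (σ.take m)) : c ≤ stopped d c σ := by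
  rw [stopped, dif_pos h]
  exact (Nat.find_spec h).2

lemma stopped_append {d : Str → ℝ≥0} {c : ℝ≥0} (σ : Str) (b : Bool) :
    stopped d c (σ ++ [b]) =
      if ∃ m, m ≤ σ.length ∧ c ≤ d (σ.take m) then stopped d c σ else d (σ ++ [b]) := by
  have hlen : (σ ++ [b]).length = σ.length + 1 := by simp
  have htake : ∀ m, m ≤ σ.length → (σ ++ [b]).take m = σ.take m := by
    intro m hm
    exact List.take_append_of_le_length hm
  split
  · next h =>
    -- σ has a stop; both Nat.finds agree
    have h' : ∃ m, m ≤ (σ ++ [b]).length ∧ c ≤ d ((σ ++ [b]).take m) := by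
      obtain ⟨m, hm, hcm⟩ := h
      exact ⟨m, by omega, by rwa [htake m hm]⟩
    rw [stopped, dif_pos h', stopped, dif_pos h]
    have hfind_le : Nat.find h' ≤ Nat.find h := by
      apply Nat.find_le
      refine ⟨by have := (Nat.find_spec h).1; omega, ?_⟩
      rw [htake _ (Nat.find_spec h).1]
      exact (Nat.find_spec h).2
    have hle : Nat.find h' ≤ σ.length := hfind_le.trans (Nat.find_spec h).1
    have hfind_ge : Nat.find h ≤ Nat.find h' := by
      apply Nat.find_le
      refine ⟨hle, ?_⟩
      rw [← htake _ hle]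
      exact (Nat.find_spec h').2
    rw [le_antisymm hfind_le hfind_ge, htake _ ((le_antisymm hfind_le hfind_ge) ▸ hle)]
  · next h =>
    rw [stopped]
    split
    · next h' =>
      have hfind : Nat.find h' = σ.length + 1 := by
        have h1 : Nat.find h' ≤ σ.length + 1 := by
          apply Nat.find_le
          refine ⟨by omega, ?_⟩
          rw [show (σ.length + 1) = (σ ++ [b]).length from hlen.symm, List.take_length]
          obtain ⟨m, hm, hcm⟩ := h'
          rcases Nat.lt_or_ge m (σ.length + 1) with hlt | hge
          · exact absurd ⟨m, by omega, by rwa [← htake m (by omega)]⟩ h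
          · rw [(by rw [hlen] at hm; omega : m = σ.length + 1),
              show (σ.length + 1) = (σ ++ [b]).length from hlen.symm, List.take_length] at hcm
            exact hcm
        have h2 : ¬ Nat.find h' ≤ σ.length := by
          intro hle
          exact h ⟨Nat.find h', hle, by rw [← htake _ hle]; exact (Nat.find_spec h').2⟩
        omega
      rw [hfind, show (σ.length + 1) = (σ ++ [b]).length from hlen.symm, List.take_length]
    · rfl

lemma stopped_isMartingale {d : Str → ℝ≥0} (hd : IsMartingale d) (c : ℝ≥0) :
    IsMartingale (stopped d c) := by
  intro σ
  rw [stopped_append σ false, stopped_append σ true]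
  split
  · next h =>
    rw [stopped, dif_pos h]
    rw [← two_mul, mul_div_assoc, eq_comm, mul_comm]
    exact div_mul_cancel₀ _ two_ne_zero
  · next h =>
    have : stopped d c σ = d σ := by rw [stopped, dif_neg h]
    rw [this, hd σ]


lemma kolmogorov (μ : MeasureTheory.Measure Seq) (hμ : FairCoin μ)
    {d : Str → ℝ≥0} (hd : IsMartingale d) {c : ℝ≥0} (hc : c ≠ 0) :
    μ {A | ∃ m, c ≤ d (pre A m)} ≤ (d [] : ℝ≥0∞) / c := by
  set F : ℕ → Set Seq := fun n => {A | ∃ m ≤ n, c ≤ d (pre A m)} with hF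
  have hmono : Monotone F := by
    intro a b hab A ⟨m, hm, hcm⟩
    exact ⟨m, hm.trans hab, hcm⟩
  have hunion : {A : Seq | ∃ m, c ≤ d (pre A m)} = ⋃ n, F n := by
    ext A
    simp only [Set.mem_setOf_eq, Set.mem_iUnion, hF]
    exact ⟨fun ⟨m, hm⟩ => ⟨m, m, le_refl m, hm⟩, fun ⟨n, m, _, hm⟩ => ⟨m, hm⟩⟩
  have key : ∀ n, c * μ (F n) ≤ (d [] : ℝ≥0∞) := by
    intro n
    set B : Finset (Fin n → Bool) :=
      Finset.univ.filter (fun x => ∃ m ≤ n, c ≤ d ((List.ofFn x).take m)) with hB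
    have hFn : F n = ⋃ x ∈ B, cyl (List.ofFn x) := by
      ext A
      simp only [hF, Set.mem_setOf_eq, Set.mem_iUnion, hB, Finset.mem_filter,
        Finset.mem_univ, true_and, mem_cyl, List.length_ofFn]
      constructor
      · intro ⟨m, hm, hcm⟩
        refine ⟨fun i => A i, ⟨m, hm, ?_⟩, rfl⟩
        show c ≤ d ((pre A n).take m)
        rwa [pre_take A hm]
      · rintro ⟨x, ⟨m, hm, hcm⟩, hA⟩
        refine ⟨m, hm, ?_⟩
        rw [← pre_take A hm, show pre A n = List.ofFn x from hA]
        exact hcm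
    have hμF : μ (F n) ≤ (B.card : ℝ≥0∞) * (2 : ℝ≥0∞)⁻¹ ^ n := by
      rw [hFn]
      calc μ (⋃ x ∈ B, cyl (List.ofFn x)) ≤ ∑ x ∈ B, μ (cyl (List.ofFn x)) :=
            MeasureTheory.measure_biUnion_finset_le B _
        _ = ∑ x ∈ B, (2 : ℝ≥0∞)⁻¹ ^ n := by
            apply Finset.sum_congr rfl
            intro x _
            rw [hμ (List.ofFn x), List.length_ofFn]
        _ = (B.card : ℝ≥0∞) * (2 : ℝ≥0∞)⁻¹ ^ n := by
            rw [Finset.sum_const, nsmul_eq_mul]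
    -- c * #B ≤ Σ_{x ∈ univ} stopped = 2^n * d []
    have hstop : ∀ x ∈ B, c ≤ stopped d c (List.ofFn x) := by
      intro x hx
      rw [hB, Finset.mem_filter] at hx
      apply le_stopped
      obtain ⟨m, hm, hcm⟩ := hx.2
      exact ⟨m, by simpa using hm, hcm⟩
    have hsum : (B.card : ℝ≥0) * c ≤ 2 ^ n * d [] := by
      calc (B.card : ℝ≥0) * c = ∑ _x ∈ B, c := by rw [Finset.sum_const, nsmul_eq_mul]
        _ ≤ ∑ x ∈ B, stopped d c (List.ofFn x) := Finset.sum_le_sum hstop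
        _ ≤ ∑ x : Fin n → Bool, stopped d c (List.ofFn x) :=
            Finset.sum_le_sum_of_subset (Finset.subset_univ B)
        _ = 2 ^ n * stopped d c [] := level_sum (stopped_isMartingale hd c) n
        _ = 2 ^ n * d [] := by rw [stopped_nil]
    calc c * μ (F n) ≤ c * ((B.card : ℝ≥0∞) * (2 : ℝ≥0∞)⁻¹ ^ n) := by
          exact mul_le_mul_right hμF c
      _ = ((B.card : ℝ≥0) * c : ℝ≥0) * (2 : ℝ≥0∞)⁻¹ ^ n := by
          push_cast; ring
      _ ≤ ((2 ^ n * d [] : ℝ≥0) : ℝ≥0∞) * (2 : ℝ≥0∞)⁻¹ ^ n := by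
          exact mul_le_mul_left (ENNReal.coe_le_coe.mpr hsum) _
      _ = (d [] : ℝ≥0∞) * (2 ^ n * (2 : ℝ≥0∞)⁻¹ ^ n) := by
          push_cast; ring
      _ = (d [] : ℝ≥0∞) := by
          rw [← ENNReal.inv_pow, ENNReal.mul_inv_cancel (by positivity) (by simp), mul_one]
  rw [hunion, Directed.measure_iUnion (hmono.directed_le)]
  apply iSup_le
  intro n
  rw [ENNReal.le_div_iff_mul_le (Or.inl (by exact_mod_cast hc)) (Or.inl ENNReal.coe_ne_top),
    mul_comm]
  exact key n

lemma eq_of_pre_eq {A B : Seq} {m : ℕ} (h : pre B m = pre A m) {i : ℕ} (hi : i < m) :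
    B i = A i := by
  have h' : pre B (pre A m).length = pre A m := by rw [length_pre]; exact h
  have := (pre_eq_iff B (pre A m)).mp h' ⟨i, by simp [hi]⟩
  simpa [pre, List.get_ofFn] using this

lemma exists_cyl_subset {U : Set Seq} (hU : IsOpen U) {A : Seq} (hA : A ∈ U) :
    ∃ m, cyl (pre A m) ⊆ U := by
  obtain ⟨I, u, hu, hsub⟩ := isOpen_pi_iff.mp hU A hA
  refine ⟨I.sup id + 1, fun B hB => hsub ?_⟩
  rw [mem_cyl, length_pre] at hB
  intro i hi
  have hi' : i ∈ I := hi
  have hBA : B i = A i :=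
    eq_of_pre_eq hB (Nat.lt_succ_of_le (by simpa using Finset.le_sup (f := id) hi'))
  rw [hBA]
  exact (hu i hi').2



lemma exists_martingale (μ : MeasureTheory.Measure Seq) (hμ : FairCoin μ) (P : Set Seq)
    (hP : μ P = 0) : ∃ d : Str → ℝ≥0, IsMartingale d ∧ P ⊆ successSet d := by
  haveI : MeasureTheory.IsFiniteMeasure μ := by
    constructor
    rw [← cyl_nil, hμ []]
    simp
  have hcov : ∀ n : ℕ, ∃ U : Set Seq, P ⊆ U ∧ IsOpen U ∧ μ U < (2 : ℝ≥0∞)⁻¹ ^ n := by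
    intro n
    obtain ⟨U, hPU, hUopen, hUlt⟩ := Set.exists_isOpen_lt_of_lt P ((2 : ℝ≥0∞)⁻¹ ^ n)
      (by rw [hP]; exact ENNReal.pow_pos (ENNReal.inv_pos.mpr ENNReal.ofNat_ne_top) n)
    exact ⟨U, hPU, hUopen, hUlt⟩
  choose U hPU hUopen hUlt using hcov
  set D : Str → ℝ≥0∞ := fun σ => ∑' n, μ (U n ∩ cyl σ) * 2 ^ σ.length with hD
  have hDne : ∀ σ, D σ ≠ ⊤ := by
    intro σ
    have hle : D σ ≤ ∑' n : ℕ, (2 : ℝ≥0∞)⁻¹ ^ n * 2 ^ σ.length := by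
      apply ENNReal.tsum_le_tsum
      intro n
      exact mul_le_mul_left
        ((MeasureTheory.measure_mono Set.inter_subset_left).trans (hUlt n).le) _
    refine (hle.trans_lt ?_).ne
    rw [ENNReal.tsum_mul_right, ENNReal.tsum_geometric]
    apply ENNReal.mul_lt_top
    · simp [ENNReal.sub_half]
    · exact ENNReal.pow_lt_top (by norm_num)
  have h2D : ∀ σ : Str, D (σ ++ [false]) + D (σ ++ [true]) = 2 * D σ := by
    intro σ
    rw [hD]
    simp only [List.length_append, List.length_singleton]
    rw [← ENNReal.tsum_add, ← ENNReal.tsum_mul_left]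
    congr 1
    funext n
    have hdisj : Disjoint (U n ∩ cyl (σ ++ [false])) (U n ∩ cyl (σ ++ [true])) :=
      ((cyl_disjoint σ).mono Set.inter_subset_right Set.inter_subset_right)
    have hunion : (U n ∩ cyl (σ ++ [false])) ∪ (U n ∩ cyl (σ ++ [true])) = U n ∩ cyl σ := by
      rw [← Set.inter_union_distrib_left, ← cyl_eq_union]
    have hmeas : MeasurableSet (U n ∩ cyl (σ ++ [true])) :=
      (hUopen n).measurableSet.inter (measurableSet_cyl _)
    rw [← add_mul, ← MeasureTheory.measure_union hdisj hmeas, hunion, pow_succ]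
    ring
  refine ⟨fun σ => (D σ).toNNReal, ?_, ?_⟩
  · intro σ
    have key : (2 * D σ).toNNReal = (D (σ ++ [false]) + D (σ ++ [true])).toNNReal := by
      rw [h2D]
    rw [ENNReal.toNNReal_mul, ENNReal.toNNReal_add (hDne _) (hDne _),
      show (2 : ℝ≥0∞).toNNReal = 2 from rfl] at key
    rw [eq_div_iff (two_ne_zero (α := ℝ≥0)), mul_comm, ← key]
  · intro A hA
    choose mfun hmfun using fun n => exists_cyl_subset (hUopen n) (hPU n hA)
    have hlow : ∀ N : ℕ, ∀ m, (Finset.range N).sup mfun ≤ m → (N : ℝ≥0∞) ≤ D (pre A m) := by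
      intro N m hm
      have : ∀ n ∈ Finset.range N, μ (U n ∩ cyl (pre A m)) * 2 ^ (pre A m).length = 1 := by
        intro n hn
        have hsubU : cyl (pre A m) ⊆ U n :=
          (cyl_anti A ((Finset.le_sup hn).trans hm)).trans (hmfun n)
        rw [Set.inter_eq_self_of_subset_right hsubU, hμ, length_pre,
          ← ENNReal.inv_pow, ENNReal.inv_mul_cancel (by norm_num) (by norm_num)]
      calc (N : ℝ≥0∞) = ∑ n ∈ Finset.range N, 1 := by simp
        _ = ∑ n ∈ Finset.range N, μ (U n ∩ cyl (pre A m)) * 2 ^ (pre A m).length :=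
            (Finset.sum_congr rfl this).symm
        _ ≤ D (pre A m) := by
            rw [hD]
            exact ENNReal.sum_le_tsum _
    show Filter.limsup (fun n => (((fun σ => (D σ).toNNReal) (pre A n) : ℝ≥0) : ℝ≥0∞))
        Filter.atTop = ⊤
    have hfun : (fun n => (((D (pre A n)).toNNReal : ℝ≥0) : ℝ≥0∞)) = fun n => D (pre A n) := by
      funext n
      exact ENNReal.coe_toNNReal (hDne _)
    rw [hfun]
    by_contra hne
    have hlt : Filter.limsup (fun n => D (pre A n)) Filter.atTop < ⊤ := lt_top_iff_ne_top.mpr hne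
    obtain ⟨N, hN⟩ := ENNReal.exists_nat_gt hne
    have : (N : ℝ≥0∞) ≤ Filter.limsup (fun n => D (pre A n)) Filter.atTop := by
      refine Filter.le_limsup_of_frequently_le (Filter.Eventually.frequently ?_)
        Filter.isBounded_le_of_top
      filter_upwards [Filter.eventually_ge_atTop ((Finset.range N).sup mfun)] with m hm
      exact hlow N m hm
    exact absurd hN (not_lt.mpr this)

lemma successSet_subset (d : Str → ℝ≥0) (c : ℝ≥0) :
    successSet d ⊆ {A | ∃ m, c ≤ d (pre A m)} := by
  intro A hA
  by_contra h
  simp only [Set.mem_setOf_eq, not_exists, not_le] at h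
  have hb : Filter.limsup (fun n => (d (pre A n) : ℝ≥0∞)) Filter.atTop ≤ (c : ℝ≥0∞) :=
    Filter.limsup_le_of_le (by isBoundedDefault)
      (Filter.Eventually.of_forall fun m => ENNReal.coe_le_coe.mpr (h m).le)
  have hA' : Filter.limsup (fun n => (d (pre A n) : ℝ≥0∞)) Filter.atTop = ⊤ := hA
  rw [hA'] at hb
  exact absurd (hb.trans_lt ENNReal.coe_lt_top) (lt_irrefl ⊤)

lemma null_of_martingale (μ : MeasureTheory.Measure Seq) (hμ : FairCoin μ)
    {d : Str → ℝ≥0} (hd : IsMartingale d) {P : Set Seq} (hP : P ⊆ successSet d) :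
    μ P = 0 := by
  by_contra h
  have hfin : μ P ≠ ⊤ := by
    have h1 : μ P ≤ μ Set.univ := MeasureTheory.measure_mono (Set.subset_univ P)
    rw [← cyl_nil, hμ []] at h1
    simp only [List.length_nil, pow_zero] at h1
    exact (h1.trans_lt (by norm_num)).ne
  obtain ⟨k, hk⟩ := ENNReal.exists_nat_gt
    ((ENNReal.div_lt_top ENNReal.coe_ne_top h).ne : (d [] : ℝ≥0∞) / μ P ≠ ⊤)
  have hk0 : (k : ℝ≥0) ≠ 0 := by
    rcases Nat.eq_zero_or_pos k with rfl | hpos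
    · simp at hk
    · exact_mod_cast hpos.ne'
  have hle : μ P ≤ (d [] : ℝ≥0∞) / ((k : ℝ≥0) : ℝ≥0∞) :=
    (MeasureTheory.measure_mono (hP.trans (successSet_subset d k))).trans
      (kolmogorov μ hμ hd hk0)
  have h1 : μ P * ((k : ℝ≥0) : ℝ≥0∞) ≤ (d [] : ℝ≥0∞) :=
    (ENNReal.le_div_iff_mul_le (Or.inl (by exact_mod_cast hk0))
      (Or.inl ENNReal.coe_ne_top)).mp hle
  have h2 : (d [] : ℝ≥0∞) < (k : ℝ≥0∞) * μ P :=
    (ENNReal.div_lt_iff (Or.inl h) (Or.inl hfin)).mp hk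
  have h3 : ((k : ℝ≥0) : ℝ≥0∞) = (k : ℝ≥0∞) := by push_cast; rfl
  rw [h3, mul_comm] at h1
  exact absurd (h2.trans_le h1) (lt_irrefl _)

/-- **Ville's theorem**: `P ⊆ 2^ω` has (outer) measure zero if and only if there is a
martingale `d` with `P ⊆ S[d]`. -/
theorem ville (μ : MeasureTheory.Measure Seq) (hμ : FairCoin μ) (P : Set Seq) :
    μ P = 0 ↔ ∃ d : Str → ℝ≥0, IsMartingale d ∧ P ⊆ successSet d := by
  constructor
  · exact exists_martingale μ hμ P
  · rintro ⟨d, hd, hPd⟩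
    exact null_of_martingale μ hμ hd hPd

end AR
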